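/- Let q ∈ [1,∞] and let s ∈ [1,∞] be its conjugate exponent (1/q + 1/s = 1). For all symmetric p×p real matrices Θ¹,…,Θᴷ, the row-column overlap norm has the dual representation Ω_q(Θ¹,…,Θᴷ) = sup { Σ_{k=1}^K trace((Λᵏ)ᵀ Θᵏ) : Λ¹,…,Λᴷ ∈ ℝ^{p×p} such that for every column index j ∈ {1,…,p}, the ℓ_s norm of the jth column of the stacked (Kp)×p matrix [Λ¹+(Λ¹)ᵀ; … ; Λᴷ+(Λᴷ)ᵀ] is at most 1 }. -/

import Mathlib

open Matrix
open scoped ENNReal BigOperators Pointwise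

/-- The ℓ_q norm of a finitely-indexed real vector, for q ∈ [0,∞]
(the maximum absolute entry when q = ∞). -/
noncomputable def lqNorm (q : ℝ≥0∞) {ι : Type*} [Fintype ι] (x : ι → ℝ) : ℝ :=
  ‖(WithLp.equiv q (ι → ℝ)).symm x‖

/-- The row-column overlap norm Ω_q of a K-tuple of p×p real matrices:
the infimum of Σ_j ‖([V¹;…;Vᴷ])_j‖_q over all decompositions Θᵏ = Vᵏ + (Vᵏ)ᵀ. -/
noncomputable def rcon (q : ℝ≥0∞) (K p : ℕ)
    (Θ : Fin K → Matrix (Fin p) (Fin p) ℝ) : ℝ :=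
  sInf { r : ℝ | ∃ V : Fin K → Matrix (Fin p) (Fin p) ℝ,
    (∀ k, Θ k = V k + (V k)ᵀ) ∧
    r = ∑ j : Fin p, lqNorm q (fun ki : Fin K × Fin p => V ki.1 ki.2 j) }

/-- The row-column overlap norm Ω_q of a single p×p matrix (the case K = 1). -/
noncomputable def rcon1 (q : ℝ≥0∞) {p : ℕ} (Θ : Matrix (Fin p) (Fin p) ℝ) : ℝ :=
  sInf { r : ℝ | ∃ V : Matrix (Fin p) (Fin p) ℝ,
    Θ = V + Vᵀ ∧ r = ∑ j : Fin p, lqNorm q (fun i => V i j) }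

section LqLemmas

variable {ι : Type*} [Fintype ι]

lemma lqNorm_nonneg (q : ℝ≥0∞) (hq : 1 ≤ q) (x : ι → ℝ) : 0 ≤ lqNorm q x := by
  haveI : Fact (1 ≤ q) := ⟨hq⟩
  exact norm_nonneg _

lemma lqNorm_zero (q : ℝ≥0∞) (hq : 1 ≤ q) : lqNorm q (0 : ι → ℝ) = 0 := by
  haveI : Fact (1 ≤ q) := ⟨hq⟩
  simp [lqNorm]

lemma lqNorm_add_le (q : ℝ≥0∞) (hq : 1 ≤ q) (x y : ι → ℝ) :
    lqNorm q (x + y) ≤ lqNorm q x + lqNorm q y := by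
  haveI : Fact (1 ≤ q) := ⟨hq⟩
  simpa [lqNorm] using
    norm_add_le ((WithLp.equiv q (ι → ℝ)).symm x) ((WithLp.equiv q (ι → ℝ)).symm y)

lemma lqNorm_smul (q : ℝ≥0∞) (hq : 1 ≤ q) (c : ℝ) (x : ι → ℝ) :
    lqNorm q (c • x) = |c| * lqNorm q x := by
  haveI : Fact (1 ≤ q) := ⟨hq⟩
  simpa [lqNorm, Real.norm_eq_abs] using norm_smul c ((WithLp.equiv q (ι → ℝ)).symm x)

lemma lqNorm_eq_sum {q : ℝ≥0∞} (hq : 0 < q.toReal) (x : ι → ℝ) :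
    lqNorm q x = (∑ i, |x i| ^ q.toReal) ^ (1 / q.toReal) := by
  rw [lqNorm, PiLp.norm_eq_sum hq]
  simp [Real.norm_eq_abs]

lemma lqNorm_top_eq (x : ι → ℝ) : lqNorm ∞ x = ⨆ i, |x i| := by
  rw [lqNorm, PiLp.norm_eq_ciSup]
  simp [Real.norm_eq_abs]

lemma lqNorm_one_eq (x : ι → ℝ) : lqNorm 1 x = ∑ i, |x i| := by
  rw [lqNorm_eq_sum (by simp)]
  simp

lemma conj_cases {q s : ℝ≥0∞} (h : q.HolderConjugate s) :
    (q = 1 ∧ s = ∞) ∨ (q = ∞ ∧ s = 1) ∨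
    (q ≠ ∞ ∧ s ≠ ∞ ∧ q.toReal.HolderConjugate s.toReal) := by
  have hadd := ENNReal.HolderConjugate.inv_add_inv_eq_one q s
  rcases eq_or_lt_of_le (ENNReal.HolderConjugate.one_le q s) with hq1 | hq1
  · left
    refine ⟨hq1.symm, ?_⟩
    rw [← hq1, inv_one] at hadd
    have : s⁻¹ = 0 := by
      have h2 : (1 : ℝ≥0∞) + s⁻¹ = 1 + 0 := by simpa using hadd
      exact (ENNReal.add_right_inj (a := 1) ENNReal.one_ne_top).mp h2
    simpa [ENNReal.inv_eq_zero] using this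
  rcases eq_or_ne q ∞ with hqt | hqt
  · right; left
    rw [hqt] at hadd
    simp at hadd
    exact ⟨hqt, by simpa [ENNReal.inv_eq_one] using hadd⟩
  · right; right
    have hsne : s ≠ ∞ := by
      intro hs
      rw [hs] at hadd
      simp [ENNReal.inv_eq_one] at hadd
      exact hq1.ne' hadd
    refine ⟨hqt, hsne, Real.holderConjugate_iff.mpr ⟨?_, ?_⟩⟩
    · have := ENNReal.toReal_strict_mono hqt hq1
      simpa using this
    · have h1 : (q⁻¹ + s⁻¹).toReal = (1 : ℝ≥0∞).toReal := by rw [hadd]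
      rw [ENNReal.toReal_add (ENNReal.inv_ne_top.mpr (ENNReal.HolderConjugate.ne_zero q s))
        (ENNReal.inv_ne_top.mpr (ENNReal.HolderConjugate.ne_zero s q))] at h1
      simpa [ENNReal.toReal_inv, one_div, ENNReal.HolderConjugate.ne_zero q s, ENNReal.HolderConjugate.ne_zero s q] using h1

lemma holder_sum {q s : ℝ≥0∞} (h : q.HolderConjugate s) (m x : ι → ℝ) :
    ∑ i, m i * x i ≤ lqNorm s m * lqNorm q x := by
  rcases conj_cases h with ⟨hq, hs⟩ | ⟨hq, hs⟩ | ⟨hq, hs, hc⟩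
  · subst hq; subst hs
    rw [lqNorm_top_eq, lqNorm_one_eq]
    calc ∑ i, m i * x i ≤ ∑ i, (⨆ j, |m j|) * |x i| := by
          refine Finset.sum_le_sum fun i _ => ?_
          calc m i * x i ≤ |m i * x i| := le_abs_self _
            _ = |m i| * |x i| := abs_mul _ _
            _ ≤ (⨆ j, |m j|) * |x i| := by
                refine mul_le_mul_of_nonneg_right ?_ (abs_nonneg _)
                exact le_ciSup (f := fun j => |m j|) (Set.Finite.bddAbove (Set.finite_range _)) i
      _ = (⨆ j, |m j|) * ∑ i, |x i| := by rw [Finset.mul_sum]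
  · subst hq; subst hs
    rw [lqNorm_one_eq, lqNorm_top_eq]
    calc ∑ i, m i * x i ≤ ∑ i, |m i| * (⨆ j, |x j|) := by
          refine Finset.sum_le_sum fun i _ => ?_
          calc m i * x i ≤ |m i * x i| := le_abs_self _
            _ = |m i| * |x i| := abs_mul _ _
            _ ≤ |m i| * ⨆ j, |x j| := by
                refine mul_le_mul_of_nonneg_left ?_ (abs_nonneg _)
                exact le_ciSup (f := fun j => |x j|) (Set.Finite.bddAbove (Set.finite_range _)) i
      _ = (∑ i, |m i|) * ⨆ j, |x j| := by rw [Finset.sum_mul]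
  · have hq0 : 0 < q.toReal := hc.pos
    have hs0 : 0 < s.toReal := hc.symm.pos
    rw [lqNorm_eq_sum hq0, lqNorm_eq_sum hs0]
    exact Real.inner_le_Lp_mul_Lq (s := Finset.univ) m x hc.symm

private lemma mul_sgn_eq (a : ℝ) : a * (if 0 ≤ a then (1:ℝ) else -1) = |a| := by
  rcases le_or_gt 0 a with h' | h'
  · simp [h', abs_of_nonneg h']
  · simp [not_le.mpr h', abs_of_neg h']

private lemma abs_sgn_eq (a : ℝ) : |if 0 ≤ a then (1:ℝ) else -1| = 1 := by
  split <;> simp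

lemma lqNorm_dual_le_one [DecidableEq ι] {q s : ℝ≥0∞} (h : q.HolderConjugate s) (m : ι → ℝ)
    (hb : ∀ x : ι → ℝ, ∑ i, m i * x i ≤ lqNorm q x) : lqNorm s m ≤ 1 := by
  rcases conj_cases h with ⟨hq, hs⟩ | ⟨hq, hs⟩ | ⟨hq, hs, hc⟩
  · subst hq; subst hs
    rw [lqNorm_top_eq]
    rcases isEmpty_or_nonempty ι with hι | hι
    · simp [Real.iSup_of_isEmpty]
    refine ciSup_le fun i => ?_
    have := hb (Pi.single i (if 0 ≤ m i then (1:ℝ) else -1))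
    rw [lqNorm_one_eq] at this
    have h1 : ∑ j, m j * Pi.single (M := fun _ => ℝ) i (if 0 ≤ m i then (1:ℝ) else -1) j
        = |m i| := by
      rw [Finset.sum_eq_single_of_mem i (Finset.mem_univ i)]
      · rw [Pi.single_eq_same, mul_sgn_eq]
      · intro j _ hj
        rw [Pi.single_eq_of_ne hj, mul_zero]
    have h2 : ∑ j, |Pi.single (M := fun _ => ℝ) i (if 0 ≤ m i then (1:ℝ) else -1) j| = 1 := by
      rw [Finset.sum_eq_single_of_mem i (Finset.mem_univ i)]
      · rw [Pi.single_eq_same, abs_sgn_eq]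
      · intro j _ hj
        rw [Pi.single_eq_of_ne hj, abs_zero]
    rw [h1, h2] at this
    exact this
  · subst hq; subst hs
    rw [lqNorm_one_eq]
    set x : ι → ℝ := fun i => if 0 ≤ m i then (1:ℝ) else -1 with hx
    have h1 : ∑ i, m i * x i = ∑ i, |m i| :=
      Finset.sum_congr rfl fun i _ => mul_sgn_eq (m i)
    have h2 : lqNorm ∞ x ≤ 1 := by
      rw [lqNorm_top_eq]
      rcases isEmpty_or_nonempty ι with hι | hι
      · simp [Real.iSup_of_isEmpty]
      refine ciSup_le fun i => ?_
      exact le_of_eq (abs_sgn_eq (m i))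
    calc ∑ i, |m i| = ∑ i, m i * x i := h1.symm
      _ ≤ lqNorm ∞ x := hb x
      _ ≤ 1 := h2
  · have hq0 : 0 < q.toReal := hc.pos
    have hs0 : 0 < s.toReal := hc.symm.pos
    set t := s.toReal
    set r := q.toReal
    set A := ∑ i, |m i| ^ t with hA
    have hA0 : 0 ≤ A := Finset.sum_nonneg fun i _ => Real.rpow_nonneg (abs_nonneg _) _
    set x : ι → ℝ := fun i => (if 0 ≤ m i then (1:ℝ) else -1) * |m i| ^ (t - 1) with hx
    have key1 : ∀ i, m i * x i = |m i| ^ t := by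
      intro i
      rcases eq_or_ne (m i) 0 with hmi | hmi
      · simp [hx, hmi, Real.zero_rpow (by positivity : t ≠ 0),
          Real.zero_rpow (by nlinarith [hc.symm.lt] : t - 1 ≠ 0)]
      · have habs : 0 < |m i| := abs_pos.mpr hmi
        calc m i * x i = (m i * (if 0 ≤ m i then (1:ℝ) else -1)) * |m i| ^ (t - 1) := by
              rw [hx]; ring
          _ = |m i| ^ (1:ℝ) * |m i| ^ (t - 1) := by rw [mul_sgn_eq, Real.rpow_one]
          _ = |m i| ^ t := by rw [← Real.rpow_add habs]; ring_nf
    have key3 : ∀ i, |x i| ^ r = |m i| ^ t := by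
      intro i
      have h2 : |x i| = |m i| ^ (t - 1) := by
        rw [hx]
        simp only [abs_mul, abs_sgn_eq, one_mul,
          abs_of_nonneg (Real.rpow_nonneg (abs_nonneg (m i)) _)]
      rw [h2, ← Real.rpow_mul (abs_nonneg (m i)), hc.symm.sub_one_mul_conj]
    have hbx := hb x
    have hsum : ∑ i, m i * x i = A := Finset.sum_congr rfl fun i _ => key1 i
    have hnq : lqNorm q x = A ^ (1 / r) := by
      rw [lqNorm_eq_sum hq0]
      congr 1
      exact Finset.sum_congr rfl fun i _ => key3 i
    rw [hsum, hnq] at hbx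
    have hA1 : A ≤ 1 := by
      by_contra hc1
      push_neg at hc1
      have : A ^ (1 / r) < A := by
        calc A ^ (1 / r) < A ^ (1:ℝ) :=
              Real.rpow_lt_rpow_of_exponent_lt hc1 (by
                rw [div_lt_one hq0]
                exact hc.lt)
          _ = A := Real.rpow_one A
      linarith
    rw [lqNorm_eq_sum hs0, ← hA]
    exact Real.rpow_le_one hA0 hA1 (by positivity)

end LqLemmas

namespace RconAux

variable {K p : ℕ}

abbrev E (K p : ℕ) := Fin K → Matrix (Fin p) (Fin p) ℝ

noncomputable def NN (q : ℝ≥0∞) (V : E K p) : ℝ :=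
  ∑ j : Fin p, lqNorm q (fun ki : Fin K × Fin p => V ki.1 ki.2 j)

def AA (X : E K p) : E K p := fun k => X k + (X k)ᵀ

lemma AA_add (X Y : E K p) : AA (X + Y) = AA X + AA Y := by
  funext k; simp [AA, Matrix.transpose_add]; abel

lemma AA_smul (c : ℝ) (X : E K p) : AA (c • X) = c • AA X := by
  funext k; simp [AA, Matrix.transpose_smul, smul_add]

noncomputable def ee (k : Fin K) (i j : Fin p) : E K p :=
  Pi.single k (Matrix.single i j 1)

lemma decomp (V : E K p) :
    V = ∑ k : Fin K, ∑ i : Fin p, ∑ j : Fin p, V k i j • ee k i j := by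
  funext k'
  ext i' j'
  simp only [Finset.sum_apply, Matrix.sum_apply, Pi.smul_apply, Matrix.smul_apply, ee,
    Pi.single_apply, Matrix.single]
  simp only [apply_ite (fun M : Matrix (Fin p) (Fin p) ℝ => M i' j'), Matrix.zero_apply,
    Matrix.of_apply, smul_eq_mul, mul_ite, mul_one, mul_zero, ite_and]
  simp [Finset.sum_ite_eq, Finset.sum_ite_eq']

/-- The pairing Σ_{k,i,j} B k i j * V k i j. -/
noncomputable def pairSum (B V : E K p) : ℝ :=
  ∑ k : Fin K, ∑ i : Fin p, ∑ j : Fin p, B k i j * V k i j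

lemma gpair (g : E K p →ₗ[ℝ] ℝ) (V : E K p) :
    g V = pairSum (fun k => Matrix.of fun i j => g (ee k i j)) V := by
  conv_lhs => rw [decomp V]
  rw [map_sum]
  refine Finset.sum_congr rfl fun k _ => ?_
  rw [map_sum]
  refine Finset.sum_congr rfl fun i _ => ?_
  rw [map_sum]
  refine Finset.sum_congr rfl fun j _ => ?_
  rw [_root_.map_smul, smul_eq_mul, mul_comm]
  rfl

lemma trace_transpose_mul (A B : Matrix (Fin p) (Fin p) ℝ) :
    (Aᵀ * B).trace = ∑ i, ∑ j, A i j * B i j := by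
  rw [Matrix.trace]
  simp only [Matrix.diag, Matrix.mul_apply, Matrix.transpose_apply]
  exact Finset.sum_comm

lemma trace_sum_eq (Λ W : E K p) :
    ∑ k, ((Λ k)ᵀ * W k).trace = pairSum Λ W :=
  Finset.sum_congr rfl fun k _ => trace_transpose_mul (Λ k) (W k)

lemma pair_swap (B V : E K p) :
    ∑ k : Fin K, ∑ i : Fin p, ∑ j : Fin p, B k i j * V k j i
      = ∑ k : Fin K, ∑ i : Fin p, ∑ j : Fin p, B k j i * V k i j := by
  refine Finset.sum_congr rfl fun k _ => ?_
  exact Finset.sum_comm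

lemma pairSum_AA (Λ V : E K p) : pairSum Λ (AA V) = pairSum (AA Λ) V := by
  unfold pairSum AA
  simp only [Matrix.add_apply, Matrix.transpose_apply, mul_add, add_mul,
    Finset.sum_add_distrib]
  congr 1
  exact pair_swap Λ V

lemma pair_reorder (B V : E K p) :
    pairSum B V = ∑ j : Fin p,
      ∑ ki : Fin K × Fin p, B ki.1 ki.2 j * V ki.1 ki.2 j := by
  unfold pairSum
  have h1 : ∀ k, ∑ i : Fin p, ∑ j : Fin p, B k i j * V k i j
      = ∑ j : Fin p, ∑ i : Fin p, B k i j * V k i j := fun k => Finset.sum_comm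
  simp_rw [h1]
  rw [Finset.sum_comm]
  refine Finset.sum_congr rfl fun j _ => ?_
  rw [Fintype.sum_prod_type]

variable (q : ℝ≥0∞) (hq : 1 ≤ q)

noncomputable def SS (X : E K p) : Set ℝ :=
  {r | ∃ V : E K p, (∀ k, AA X k = V k + (V k)ᵀ) ∧ r = NN q V}

include hq

lemma NN_nonneg (V : E K p) : 0 ≤ NN q V :=
  Finset.sum_nonneg fun _ _ => lqNorm_nonneg q hq _

lemma NN_zero : NN q (0 : E K p) = 0 := by
  unfold NN
  rw [Finset.sum_eq_zero]
  intro j _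
  rw [show (fun ki : Fin K × Fin p => (0 : E K p) ki.1 ki.2 j) = (0 : Fin K × Fin p → ℝ) from rfl]
  exact lqNorm_zero q hq

lemma NN_add_le (V W : E K p) : NN q (V + W) ≤ NN q V + NN q W := by
  unfold NN
  rw [← Finset.sum_add_distrib]
  refine Finset.sum_le_sum fun j _ => ?_
  have : (fun ki : Fin K × Fin p => (V + W) ki.1 ki.2 j)
      = (fun ki : Fin K × Fin p => V ki.1 ki.2 j) + (fun ki : Fin K × Fin p => W ki.1 ki.2 j) :=
    rfl
  rw [this]
  exact lqNorm_add_le q hq _ _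

lemma NN_smul (c : ℝ) (V : E K p) : NN q (c • V) = |c| * NN q V := by
  unfold NN
  rw [Finset.mul_sum]
  refine Finset.sum_congr rfl fun j _ => ?_
  have : (fun ki : Fin K × Fin p => (c • V) ki.1 ki.2 j)
      = c • (fun ki : Fin K × Fin p => V ki.1 ki.2 j) := rfl
  rw [this]
  exact lqNorm_smul q hq c _

omit hq in
lemma mem_SS_self (X : E K p) : NN q X ∈ SS q X :=
  ⟨X, fun _ => rfl, rfl⟩

lemma SS_bddBelow (X : E K p) : BddBelow (SS q X) := by
  refine ⟨0, fun r hr => ?_⟩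
  obtain ⟨V, -, rfl⟩ := hr
  exact NN_nonneg q hq V

noncomputable def Psi (X : E K p) : ℝ := sInf (SS q X)

lemma Psi_nonneg (X : E K p) : 0 ≤ Psi q X := by
  refine le_csInf ⟨NN q X, mem_SS_self q X⟩ fun r hr => ?_
  obtain ⟨V, -, rfl⟩ := hr
  exact NN_nonneg q hq V

lemma Psi_le (X V : E K p) (hV : ∀ k, AA X k = V k + (V k)ᵀ) : Psi q X ≤ NN q V :=
  csInf_le (SS_bddBelow q hq X) ⟨V, hV, rfl⟩

lemma Psi_eq_zero_of_AA_eq_zero (X : E K p) (hX : AA X = 0) : Psi q X = 0 := by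
  refine le_antisymm ?_ (Psi_nonneg q hq X)
  have h0 : Psi q X ≤ NN q (0 : E K p) := by
    refine Psi_le q hq X 0 fun k => ?_
    rw [hX]
    simp
  rw [NN_zero q hq] at h0
  exact h0

lemma Psi_add (X Y : E K p) : Psi q (X + Y) ≤ Psi q X + Psi q Y := by
  have key : ∀ a ∈ SS q X, ∀ b ∈ SS q Y, Psi q (X + Y) ≤ a + b := by
    rintro a ⟨V, hV, rfl⟩ b ⟨W, hW, rfl⟩
    have hfeas : ∀ k, AA (X + Y) k = (V + W) k + ((V + W) k)ᵀ := by
      intro k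
      rw [AA_add]
      simp only [Pi.add_apply, Matrix.transpose_add, hV k, hW k]
      abel
    calc Psi q (X + Y) ≤ NN q (V + W) := Psi_le q hq _ _ hfeas
      _ ≤ NN q V + NN q W := NN_add_le q hq V W
  have h2 : ∀ a ∈ SS q X, Psi q (X + Y) - a ≤ Psi q Y := by
    intro a ha
    refine le_csInf ⟨NN q Y, mem_SS_self q Y⟩ fun b hb => ?_
    have := key a ha b hb
    linarith
  have h3 : Psi q (X + Y) - Psi q Y ≤ Psi q X := by
    refine le_csInf ⟨NN q X, mem_SS_self q X⟩ fun a ha => ?_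
    have := h2 a ha
    linarith
  linarith

lemma Psi_smul (c : ℝ) (hc : 0 < c) (X : E K p) : Psi q (c • X) = c * Psi q X := by
  have himg : SS q (c • X) = (fun r => c * r) '' SS q X := by
    ext r
    constructor
    · rintro ⟨V, hV, rfl⟩
      refine ⟨NN q (c⁻¹ • V), ⟨c⁻¹ • V, fun k => ?_, rfl⟩, ?_⟩
      · have h1 : c • AA X k = V k + (V k)ᵀ := by
          rw [← Pi.smul_apply, ← AA_smul]; exact hV k
        calc AA X k = c⁻¹ • (c • AA X k) := by rw [inv_smul_smul₀ hc.ne']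
          _ = c⁻¹ • (V k + (V k)ᵀ) := by rw [h1]
          _ = (c⁻¹ • V) k + ((c⁻¹ • V) k)ᵀ := by
              simp [smul_add, Matrix.transpose_smul]
      · rw [NN_smul q hq, abs_of_pos (inv_pos.mpr hc)]
        field_simp
    · rintro ⟨a, ⟨V, hV, rfl⟩, rfl⟩
      refine ⟨c • V, fun k => ?_, ?_⟩
      · rw [AA_smul]
        simp only [Pi.smul_apply, Matrix.transpose_smul, hV k, smul_add]
      · rw [NN_smul q hq, abs_of_pos hc]
  rw [Psi, himg]
  have himg2 : (fun r => c * r) '' SS q X = c • SS q X := by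
    ext r; simp [Set.mem_smul_set, smul_eq_mul]
  rw [himg2, Real.sInf_smul_of_nonneg hc.le]
  rfl

omit hq

/-- Weak duality. -/
lemma weak_duality {s : ℝ≥0∞} (hqs : q.HolderConjugate s) (Λ V : E K p)
    (hΛ : ∀ j : Fin p, lqNorm s (fun ki : Fin K × Fin p => (AA Λ) ki.1 ki.2 j) ≤ 1) :
    pairSum Λ (AA V) ≤ NN q V := by
  have hq : 1 ≤ q := ENNReal.HolderConjugate.one_le q s
  rw [pairSum_AA, pair_reorder]
  unfold NN
  refine Finset.sum_le_sum fun j _ => ?_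
  calc ∑ ki : Fin K × Fin p, (AA Λ) ki.1 ki.2 j * V ki.1 ki.2 j
      ≤ lqNorm s (fun ki : Fin K × Fin p => (AA Λ) ki.1 ki.2 j)
        * lqNorm q (fun ki : Fin K × Fin p => V ki.1 ki.2 j) := holder_sum hqs _ _
    _ ≤ lqNorm q (fun ki : Fin K × Fin p => V ki.1 ki.2 j) :=
        mul_le_of_le_one_left (lqNorm_nonneg q hq _) (hΛ j)

end RconAux

open RconAux in
theorem rcon_dual_representation (K p : ℕ) (q s : ℝ≥0∞)
    (hq : 1 ≤ q) (hqs : q⁻¹ + s⁻¹ = 1)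
    (Θ : Fin K → Matrix (Fin p) (Fin p) ℝ) (hΘ : ∀ k, (Θ k).IsSymm) :
    rcon q K p Θ =
      sSup { r : ℝ | ∃ Λ : Fin K → Matrix (Fin p) (Fin p) ℝ,
        (∀ j : Fin p,
          lqNorm s (fun ki : Fin K × Fin p => (Λ ki.1 + (Λ ki.1)ᵀ) ki.2 j) ≤ 1) ∧
        r = ∑ k : Fin K, ((Λ k)ᵀ * Θ k).trace } := by
  have hconj : q.HolderConjugate s := ENNReal.holderConjugate_iff.mpr hqs
  have hs1 : 1 ≤ s := ENNReal.HolderConjugate.one_le s q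
  set X : E K p := (2⁻¹ : ℝ) • Θ with hX
  have hAAX : AA X = Θ := by
    funext k
    have hsym : (Θ k)ᵀ = Θ k := hΘ k
    show X k + (X k)ᵀ = Θ k
    rw [hX]
    simp only [Pi.smul_apply, Matrix.transpose_smul, hsym]
    rw [← add_smul]
    norm_num
  have hrcon : rcon q K p Θ = Psi q X := by
    rw [rcon, Psi]
    congr 1
    unfold SS NN
    rw [hAAX]
  set T := { r : ℝ | ∃ Λ : Fin K → Matrix (Fin p) (Fin p) ℝ,
        (∀ j : Fin p,
          lqNorm s (fun ki : Fin K × Fin p => (Λ ki.1 + (Λ ki.1)ᵀ) ki.2 j) ≤ 1) ∧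
        r = ∑ k : Fin K, ((Λ k)ᵀ * Θ k).trace } with hT
  have hTub : ∀ r ∈ T, r ≤ Psi q X := by
    rintro r ⟨Λ, hΛ, rfl⟩
    refine le_csInf ⟨NN q X, mem_SS_self q X⟩ ?_
    rintro b ⟨V, hV, rfl⟩
    rw [trace_sum_eq]
    have hΘV : Θ = AA V := by
      funext k
      rw [← hAAX]
      exact hV k
    rw [hΘV]
    exact weak_duality q hconj Λ V hΛ
  have hT0 : (0:ℝ) ∈ T := by
    refine ⟨0, fun j => ?_, by simp⟩
    have hz : (fun ki : Fin K × Fin p =>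
        ((0 : E K p) ki.1 + ((0 : E K p) ki.1)ᵀ) ki.2 j) = (0 : Fin K × Fin p → ℝ) := by
      funext ki; simp
    rw [hz, lqNorm_zero s hs1]
    norm_num
  have hbddT : BddAbove T := ⟨Psi q X, fun r hr => hTub r hr⟩
  rcases eq_or_ne Θ 0 with h0 | h0
  · rw [hrcon]
    have hX0 : X = 0 := by rw [hX, h0, smul_zero]
    have hPsi0 : Psi q X = 0 := by
      refine Psi_eq_zero_of_AA_eq_zero q hq X ?_
      rw [hAAX, h0]
    rw [hPsi0]
    refine le_antisymm (le_csSup hbddT hT0) (csSup_le ⟨0, hT0⟩ fun r hr => ?_)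
    have := hTub r hr
    rw [hPsi0] at this
    exact this
  · have hX0 : X ≠ 0 := by
      intro h
      apply h0
      have hΘ2 : Θ = (2:ℝ) • X := by
        rw [hX, smul_smul]
        norm_num
      rw [hΘ2, h, smul_zero]
    set f := LinearPMap.mkSpanSingleton (K := ℝ) (L := ℝ) (σ := RingHom.id ℝ) X (Psi q X) hX0 with hf_def
    have hf : ∀ z : f.domain, f z ≤ Psi q (z : E K p) := by
      rintro ⟨z, hz⟩
      obtain ⟨c, rfl⟩ := Submodule.mem_span_singleton.mp hz
      have happ : f ⟨c • X, hz⟩ = c • Psi q X :=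
        LinearPMap.mkSpanSingleton'_apply X (Psi q X) _ c hz
      rw [happ]
      rcases lt_trichotomy c 0 with hc0 | hc0 | hc0
      · have h1 : c • Psi q X ≤ 0 := by
          rw [smul_eq_mul]
          exact mul_nonpos_of_nonpos_of_nonneg hc0.le (Psi_nonneg q hq X)
        exact h1.trans (Psi_nonneg q hq _)
      · subst hc0
        simpa using Psi_nonneg q hq ((0:ℝ) • X)
      · rw [smul_eq_mul, ← Psi_smul q hq c hc0]
    obtain ⟨g, hg1, hg2⟩ := exists_extension_of_le_sublinear f (Psi q)
      (fun c hc x => Psi_smul q hq c hc x) (Psi_add q hq) hf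
    have hgX : g X = Psi q X := by
      have h1 := hg1 ⟨X, Submodule.mem_span_singleton_self X⟩
      rw [h1]
      exact LinearPMap.mkSpanSingleton_apply ℝ ℝ hX0 (Psi q X)
    set M : E K p := fun k => Matrix.of fun i j => g (ee k i j) with hM
    have hgpair : ∀ V, g V = pairSum M V := fun V => gpair g V
    have hgle : ∀ V : E K p, g V ≤ NN q V :=
      fun V => (hg2 V).trans (Psi_le q hq V V fun k => rfl)
    have hee : ∀ (k₀ k' : Fin K) (i j a b : Fin p),
        (ee k₀ i j : E K p) k' a b = if k' = k₀ ∧ i = a ∧ j = b then 1 else 0 := by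
      intro k₀ k' i j a b
      unfold ee
      rw [Pi.single_apply]
      by_cases hkk : k' = k₀
      · simp [hkk, Matrix.single, ite_and]
      · simp [hkk]
    have hMsym : ∀ (k : Fin K) (i j : Fin p), M k j i = M k i j := by
      intro k i j
      have hZ : AA (ee k i j - ee k j i : E K p) = 0 := by
        funext k'
        ext a b
        show (ee k i j - ee k j i : E K p) k' a b
            + (ee k i j - ee k j i : E K p) k' b a = 0
        simp only [Pi.sub_apply, Matrix.sub_apply, hee, Matrix.zero_apply]
        split_ifs <;> (try ring) <;> tauto
      have hZ' : AA (ee k j i - ee k i j : E K p) = 0 := by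
        rw [show (ee k j i - ee k i j : E K p) = (-1 : ℝ) • (ee k i j - ee k j i) from by
          rw [neg_one_smul, neg_sub], AA_smul, hZ, smul_zero]
      have h1 : g (ee k i j - ee k j i) ≤ 0 :=
        (hg2 _).trans_eq (Psi_eq_zero_of_AA_eq_zero q hq _ hZ)
      have h2 : g (ee k j i - ee k i j) ≤ 0 :=
        (hg2 _).trans_eq (Psi_eq_zero_of_AA_eq_zero q hq _ hZ')
      rw [map_sub] at h1 h2
      have : g (ee k i j) = g (ee k j i) := by linarith
      show g (ee k j i) = g (ee k i j)
      exact this.symm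
    have hcol : ∀ j : Fin p, lqNorm s (fun ki : Fin K × Fin p => M ki.1 ki.2 j) ≤ 1 := by
      intro j
      refine lqNorm_dual_le_one hconj _ fun x => ?_
      set V : E K p := fun k => Matrix.of fun i j' => if j' = j then x (k, i) else 0 with hV
      have h1 : pairSum M V = ∑ ki : Fin K × Fin p, M ki.1 ki.2 j * x ki := by
        rw [pair_reorder]
        rw [Finset.sum_eq_single_of_mem j (Finset.mem_univ j)]
        · refine Finset.sum_congr rfl fun ki _ => ?_
          simp [hV]
        · intro j' _ hj'
          refine Finset.sum_eq_zero fun ki _ => ?_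
          simp [hV, hj']
      have h2 : NN q V = lqNorm q x := by
        unfold NN
        rw [Finset.sum_eq_single_of_mem j (Finset.mem_univ j)]
        · congr 1
          funext ki
          simp [hV]
        · intro j' _ hj'
          have hfun : (fun ki : Fin K × Fin p => V ki.1 ki.2 j') = (0 : Fin K × Fin p → ℝ) := by
            funext ki; simp [hV, hj']
          rw [hfun, lqNorm_zero q hq]
      calc ∑ ki : Fin K × Fin p, M ki.1 ki.2 j * x ki = pairSum M V := h1.symm
        _ = g V := (hgpair V).symm
        _ ≤ NN q V := hgle V
        _ = lqNorm q x := h2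
    set Λ : E K p := fun k => (2⁻¹ : ℝ) • M k with hΛdef
    have hAAΛ : ∀ k, Λ k + (Λ k)ᵀ = M k := by
      intro k
      ext a b
      show (2⁻¹ : ℝ) * M k a b + (2⁻¹ : ℝ) * M k b a = M k a b
      rw [hMsym k a b]
      ring
    have hmem : Psi q X ∈ T := by
      refine ⟨Λ, fun j => ?_, ?_⟩
      · have hfun : (fun ki : Fin K × Fin p => (Λ ki.1 + (Λ ki.1)ᵀ) ki.2 j)
            = fun ki : Fin K × Fin p => M ki.1 ki.2 j := by
          funext ki
          rw [hAAΛ ki.1]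
        rw [hfun]
        exact hcol j
      · rw [trace_sum_eq]
        have hp1 : pairSum Λ Θ = 2⁻¹ * pairSum M Θ := by
          unfold pairSum
          simp only [Finset.mul_sum]
          refine Finset.sum_congr rfl fun k _ => Finset.sum_congr rfl fun i _ =>
            Finset.sum_congr rfl fun j _ => ?_
          show ((2⁻¹ : ℝ) • M k) i j * Θ k i j = 2⁻¹ * (M k i j * Θ k i j)
          simp [mul_assoc]
        have hgΘ : g Θ = 2 * Psi q X := by
          have hΘ2 : Θ = (2:ℝ) • X := by
            rw [hX, smul_smul]
            norm_num
          calc g Θ = g ((2:ℝ) • X) := by rw [← hΘ2]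
            _ = (2:ℝ) • g X := LinearMap.map_smul g 2 X
            _ = 2 * Psi q X := by rw [smul_eq_mul, hgX]
        rw [hp1, ← hgpair Θ, hgΘ]
        ring
    rw [hrcon]
    exact le_antisymm (csSup_le ⟨0, hT0⟩ hTub) (le_csSup hbddT hmem) |>.symm
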